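/- Let G be a group and k a commutative ring. The Hochschild cochain complex splits as a direct sum of cochain complexes Hom_k(k[G]^{⊗*}, k[G]) ≅ AP(k[G]^{⊗*}) ⊕ NP(k[G]^{⊗*}), where every cochain f decomposes uniquely as f = f_1 + f_2 with f_1 strictly autopoietic (f_1(g_1 ⊗ ⋯ ⊗ g_n) = π_{g_1⋯g_n}(f(g_1 ⊗ ⋯ ⊗ g_n))·(g_1⋯g_n)) and f_2 non-autopoietic, and both summands are closed under the Hochschild coboundary δ. -/

import Mathlib

open MonoidAlgebra

variable {k G : Type} [CommRing k] [Group G]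

/-- Hochschild cochains on the group ring, modeled by values on basis tuples;
this is `Hom_k(k[G]^{⊗n}, k[G])`. -/
abbrev GCochain (k G : Type) [CommRing k] [Group G] (n : ℕ) : Type :=
  (Fin n → G) → MonoidAlgebra k G

/-- Merge the `i`-th and `(i+1)`-st entries of a tuple. -/
def gmerge {n : ℕ} (g : Fin (n + 1) → G) (i : Fin n) : Fin n → G := fun j =>
  if (j : ℕ) < i then g j.castSucc
  else if (j : ℕ) = i then g j.castSucc * g j.succ
  else g j.succ

/-- The Hochschild coboundary
`(δf)(g_1,…,g_{n+1}) = g_1 f(g_2,…,g_{n+1}) + Σ_{i=1}^{n} (-1)^i f(g_1,…,g_i g_{i+1},…,g_{n+1})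
  + (-1)^{n+1} f(g_1,…,g_n) g_{n+1}`. -/
noncomputable def gdelta (k G : Type) [CommRing k] [Group G] (n : ℕ) :
    GCochain k G n →ₗ[k] GCochain k G (n + 1) :=
  (LinearMap.pi fun g =>
      (LinearMap.mulLeft k (single (g 0) (1 : k))).comp (LinearMap.proj (Fin.tail g)))
  + (∑ i : Fin n, ((-1 : k) ^ ((i : ℕ) + 1)) •
      LinearMap.pi fun g => LinearMap.proj (gmerge g i))
  + ((-1 : k) ^ (n + 1)) •
      LinearMap.pi fun g =>
        (LinearMap.mulRight k (single (g (Fin.last n)) (1 : k))).comp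
          (LinearMap.proj (Fin.init g))

/-- The ordered product of a tuple of group elements. -/
def gprod {n : ℕ} (g : Fin n → G) : G := (List.ofFn g).prod

/-- A cochain is (strictly) autopoietic if `f(g_1 ⊗ ⋯ ⊗ g_n) = λ_{g_1,…,g_n}·(g_1 g_2 ⋯ g_n)`
(in degree `0`, `f(1) = λ·e`). -/
def IsAP {n : ℕ} (f : GCochain k G n) : Prop :=
  ∀ g : Fin n → G, ∃ c : k, f g = c • single (gprod g) (1 : k)

/-- A cochain is non-autopoietic if the coefficient of `g_1 g_2 ⋯ g_n` in
`f(g_1 ⊗ ⋯ ⊗ g_n)` vanishes for every tuple (in degree `0`, the coefficient of `e`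
in `f(1)` vanishes). -/
def IsNP {n : ℕ} (f : GCochain k G n) : Prop :=
  ∀ g : Fin n → G, (f g).coeff (gprod g) = 0

/-- The (strictly) autopoietic part of a cochain:
`π(f)(g_1 ⊗ ⋯ ⊗ g_n) = π_{g_1⋯g_n}(f(g_1 ⊗ ⋯ ⊗ g_n))·(g_1⋯g_n)`. -/
noncomputable def apPart {n : ℕ} (f : GCochain k G n) : GCochain k G n :=
  fun g => (f g).coeff (gprod g) • single (gprod g) (1 : k)

lemma gprod_cons {n : ℕ} (a : G) (v : Fin n → G) : gprod (Fin.cons a v) = a * gprod v := by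
  simp [gprod, List.ofFn_succ]

lemma gprod_tail {n : ℕ} (g : Fin (n+1) → G) : gprod g = g 0 * gprod (Fin.tail g) := by
  rw [gprod, List.ofFn_succ, List.prod_cons]; rfl

lemma gprod_init {n : ℕ} (g : Fin (n+1) → G) : gprod g = gprod (Fin.init g) * g (Fin.last n) := by
  rw [gprod, List.ofFn_succ', List.concat_eq_append, List.prod_append, List.prod_cons,
    List.prod_nil, mul_one]; rfl

lemma gmerge_zero {n : ℕ} (g : Fin (n+2) → G) :
    gmerge g 0 = Fin.cons (g 0 * g 1) (fun j : Fin n => g j.succ.succ) := by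
  funext j
  refine Fin.cases ?_ (fun j => ?_) j <;> simp [gmerge, Fin.ext_iff]

lemma gmerge_succ {n : ℕ} (g : Fin (n+2) → G) (j : Fin n) :
    gmerge g j.succ = Fin.cons (g 0) (gmerge (Fin.tail g) j) := by
  funext i
  refine Fin.cases ?_ (fun i => ?_) i
  · simp [gmerge]
  · simp only [Fin.cons_succ, gmerge, Fin.tail, Fin.val_succ]
    rcases lt_trichotomy (i : ℕ) (j : ℕ) with h | h | h
    · simp [h, Nat.succ_lt_succ h]
    · simp [h]
    · have h1 : ¬ (i : ℕ) + 1 < (j : ℕ) + 1 := by omega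
      have h2 : ¬ (i : ℕ) + 1 = (j : ℕ) + 1 := by omega
      have h3 : ¬ (i : ℕ) < (j : ℕ) := by omega
      have h4 : ¬ (i : ℕ) = (j : ℕ) := by omega
      simp [h1, h2, h3, h4]

lemma gprod_gmerge {n : ℕ} (g : Fin (n+1) → G) (i : Fin n) : gprod (gmerge g i) = gprod g := by
  induction n with
  | zero => exact absurd i.2 (by omega)
  | succ n ih =>
    refine Fin.cases ?_ (fun j => ?_) i
    · rw [gmerge_zero, gprod_cons, gprod_tail g, gprod_tail (Fin.tail g), mul_assoc]
      rfl
    · rw [gmerge_succ, gprod_cons, ih, ← gprod_tail]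

lemma gdelta_apply {n : ℕ} (f : GCochain k G n) (g : Fin (n+1) → G) :
    gdelta k G n f g =
      single (g 0) (1:k) * f (Fin.tail g)
        + (∑ i : Fin n, ((-1:k) ^ ((i:ℕ)+1)) • f (gmerge g i))
        + ((-1:k) ^ (n+1)) • (f (Fin.init g) * single (g (Fin.last n)) (1:k)) := by
  simp [gdelta, LinearMap.sum_apply, Finset.sum_apply]

/-- The Hochschild cochain complex splits as the direct sum of cochain
complexes `AP(k[G]^{⊗*}) ⊕ NP(k[G]^{⊗*})`: every cochain `f` decomposes uniquely as
`f = f₁ + f₂` with `f₁` strictly autopoietic (given by the stated formula) and `f₂`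
non-autopoietic, and both summands are closed under the Hochschild coboundary `δ`. -/
theorem stmt_6 :
    (∀ (n : ℕ) (f : GCochain k G n),
      IsAP (apPart f) ∧ IsNP (f - apPart f) ∧ f = apPart f + (f - apPart f) ∧
      (∀ f₁ f₂ : GCochain k G n,
        IsAP f₁ → IsNP f₂ → f = f₁ + f₂ → f₁ = apPart f ∧ f₂ = f - apPart f)) ∧
    (∀ (n : ℕ) (f : GCochain k G n), IsAP f → IsAP (gdelta k G n f)) ∧
    (∀ (n : ℕ) (f : GCochain k G n), IsNP f → IsNP (gdelta k G n f)) := by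
  refine ⟨fun n f => ⟨fun g => ⟨(f g).coeff (gprod g), rfl⟩, ?_, by abel, ?_⟩, ?_, ?_⟩
  · intro g
    rw [Pi.sub_apply, apPart, MonoidAlgebra.coeff_sub, Finsupp.sub_apply, MonoidAlgebra.coeff_smul,
      Finsupp.smul_apply, MonoidAlgebra.coeff_single, Finsupp.single_eq_same,
      smul_eq_mul, mul_one, sub_self]
  · intro f₁ f₂ hA hN heq
    have h1 : f₁ = apPart f := by
      funext g
      obtain ⟨c, hc⟩ := hA g
      have hfc : (f g).coeff (gprod g) = c := by
        rw [heq]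
        rw [Pi.add_apply, MonoidAlgebra.coeff_add, Finsupp.add_apply, hc, hN g, add_zero,
          MonoidAlgebra.coeff_smul, Finsupp.smul_apply, MonoidAlgebra.coeff_single,
          Finsupp.single_eq_same, smul_eq_mul, mul_one]
      rw [apPart, hfc, hc]
    exact ⟨h1, by rw [← h1, heq]; abel⟩
  · intro n f hf g
    have key : gdelta k G n f g ∈ Submodule.span k {single (gprod g) (1:k)} := by
      rw [gdelta_apply]
      refine add_mem (add_mem ?_ ?_) ?_
      · obtain ⟨c, hc⟩ := hf (Fin.tail g)
        rw [hc, mul_smul_comm, MonoidAlgebra.single_mul_single, one_mul, ← gprod_tail]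
        exact Submodule.smul_mem _ _ (Submodule.mem_span_singleton_self _)
      · refine Submodule.sum_mem _ fun i _ => Submodule.smul_mem _ _ ?_
        obtain ⟨c, hc⟩ := hf (gmerge g i)
        rw [hc, gprod_gmerge]
        exact Submodule.smul_mem _ _ (Submodule.mem_span_singleton_self _)
      · refine Submodule.smul_mem _ _ ?_
        obtain ⟨c, hc⟩ := hf (Fin.init g)
        rw [hc, smul_mul_assoc, MonoidAlgebra.single_mul_single, one_mul, ← gprod_init]
        exact Submodule.smul_mem _ _ (Submodule.mem_span_singleton_self _)
    obtain ⟨c, hc⟩ := Submodule.mem_span_singleton.mp key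
    exact ⟨c, hc.symm⟩
  · intro n f hf g
    rw [gdelta_apply]
    have h1 : (single (g 0) (1:k) * f (Fin.tail g)).coeff (gprod g) = 0 := by
      rw [MonoidAlgebra.coeff_single_mul_apply]
      have : (g 0)⁻¹ * gprod g = gprod (Fin.tail g) := by
        rw [gprod_tail g, inv_mul_cancel_left]
      rw [this, hf, mul_zero]
    have h3 : (f (Fin.init g) * single (g (Fin.last n)) (1:k)).coeff (gprod g) = 0 := by
      rw [MonoidAlgebra.coeff_mul_single_apply]
      have : gprod g * (g (Fin.last n))⁻¹ = gprod (Fin.init g) := by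
        rw [gprod_init g, mul_inv_cancel_right]
      rw [this, hf, zero_mul]
    have hsum : ∀ i ∈ (Finset.univ : Finset (Fin n)),
        (((-1:k) ^ ((i:ℕ)+1)) • f (gmerge g i)).coeff (gprod g) = 0 := by
      intro i _
      rw [MonoidAlgebra.coeff_smul_apply, ← gprod_gmerge g i, hf, smul_zero]
    rw [MonoidAlgebra.coeff_add, MonoidAlgebra.coeff_add, Finsupp.add_apply, Finsupp.add_apply, h1,
      MonoidAlgebra.coeff_smul_apply, h3, smul_zero,
      MonoidAlgebra.coeff_sum, Finsupp.finset_sum_apply, Finset.sum_congr rfl hsum, Finset.sum_const_zero,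
      zero_add, add_zero]
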